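/- Let m ≥ 1 be an integer, let θ ∈ [0, 1/2), and let X_1, …, X_m be i.i.d. Rademacher random variables with parameter 1/2 + θ. Then X = Σ_{i=1}^m X_i satisfies P(X > 0) − P(X < 0) ≥ √(2/(π·e))·min{√m·θ, 1}. -/

import Mathlib

open Real Finset MeasureTheory ProbabilityTheory



lemma sqrtpi_le_stirling (n : ℕ) : √Real.pi ≤ Stirling.stirlingSeq (n+1) := by
  have h := Stirling.stirlingSeq'_antitone
  have ht : Filter.Tendsto (Stirling.stirlingSeq ∘ Nat.succ) Filter.atTop (nhds (√Real.pi)) :=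
    (Filter.tendsto_add_atTop_iff_nat 1).2 Stirling.tendsto_stirlingSeq_sqrt_pi
  exact h.le_of_tendsto ht n

lemma factorial_eq_stirling {n : ℕ} (h : 1 ≤ n) :
    (n.factorial : ℝ) = Stirling.stirlingSeq n * (√(2*n) * ((n:ℝ)/Real.exp 1)^n) := by
  rw [Stirling.stirlingSeq, div_mul_cancel₀]
  have : (0:ℝ) < n := by exact_mod_cast h
  positivity

lemma stirlingSeq_two : Stirling.stirlingSeq 2 = Real.exp 1 ^ 2 / 4 := by
  rw [Stirling.stirlingSeq]
  have h4 : √(2*(2:ℕ)) = 2 := by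
    rw [show (2*(2:ℕ):ℝ) = 2^2 by norm_num, Real.sqrt_sq (by norm_num)]
  rw [h4]
  have := Real.exp_pos 1
  norm_num [Nat.factorial]
  field_simp
  rw [show (2:ℝ) = 1 + 1 by norm_num, Real.exp_add]; ring

lemma centralBinom_lower {t : ℕ} (ht : 2 ≤ t) :
    √Real.pi * 16 / Real.exp 1 ^ 4 * 4^t / √t ≤ ((2*t).choose t : ℝ) := by
  have ht0 : (0:ℝ) < t := by exact_mod_cast (by omega : 0 < t)
  set r := √(t:ℝ) with hr
  set E := Real.exp 1 with hE
  set S := Stirling.stirlingSeq t with hS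
  set S2 := Stirling.stirlingSeq (2*t) with hS2
  set P := ((t:ℝ)/E)^t with hP
  have hrpos : 0 < r := Real.sqrt_pos.2 ht0
  have hEpos : (0:ℝ) < E := Real.exp_pos 1
  have hPpos : 0 < P := by positivity
  have hSpos : 0 < S := by
    rw [hS, show t = (t-1)+1 by omega]; exact Stirling.stirlingSeq'_pos _
  have hS2pos : 0 < S2 := by
    rw [hS2, show 2*t = (2*t-1)+1 by omega]; exact Stirling.stirlingSeq'_pos _
  have hrr : r * r = (t:ℝ) := Real.mul_self_sqrt ht0.le
  have h1 : (t.factorial:ℝ) = S * (√2 * r * P) := by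
    rw [factorial_eq_stirling (by omega), ← hP, ← hS]
    rw [show (2*(t:ℕ):ℝ) = 2 * (t:ℝ) by push_cast; ring, Real.sqrt_mul (by norm_num)]
  have h2 : ((2*t).factorial:ℝ) = S2 * (2 * r * (4^t * P^2)) := by
    rw [factorial_eq_stirling (by omega : 1 ≤ 2*t), ← hS2]
    have e1 : √(2*((2*t:ℕ):ℝ)) = 2 * r := by
      rw [show (2*((2*t:ℕ):ℝ)) = 2^2 * (t:ℝ) by push_cast; ring, Real.sqrt_mul (by norm_num),
        Real.sqrt_sq (by norm_num)]
    have e2 : (((2*t:ℕ):ℝ)/E)^(2*t) = 4^t * P^2 := by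
      have h21 : ((2*t:ℕ):ℝ)/E = 2*((t:ℝ)/E) := by push_cast; ring
      rw [h21, mul_pow, hP, ← pow_mul, show t*2 = 2*t from mul_comm t 2]
      congr 1
      rw [pow_mul]; norm_num
    rw [e1, e2]
  have hfacteq := Nat.choose_mul_factorial_mul_factorial (by omega : t ≤ 2*t)
  rw [show 2*t - t = t by omega] at hfacteq
  have hfact : ((2*t).choose t : ℝ) * t.factorial * t.factorial = (2*t).factorial := by
    exact_mod_cast congrArg (Nat.cast : ℕ → ℝ) hfacteq
  have hs2 : (√2)*(√2) = 2 := Real.mul_self_sqrt (by norm_num)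
  have key : ((2*t).choose t : ℝ) * (S * (√2 * r * P) * (S * (√2 * r * P)))
      = S2 * (2 * r * (4^t * P^2)) := by
    rw [← h1, ← h2, ← hfact]; ring
  have hC : ((2*t).choose t : ℝ) = S2 * 4^t / (S^2 * r) := by
    rw [eq_div_iff (by positivity)]
    have aux : ((2*t).choose t : ℝ) * (S^2 * r) * (2*r*P^2)
        = S2 * 4^t * (2*r*P^2) := by
      linear_combination key - ((2*t).choose t:ℝ)*S^2*r*r*P^2*hs2
    exact mul_right_cancel₀ (by positivity) aux
  rw [hC]
  have hpi : √Real.pi ≤ S2 := by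
    rw [hS2, show 2*t = (2*t-1)+1 by omega]; exact sqrtpi_le_stirling _
  have hSle : S ≤ E^2/4 := by
    rw [hS, hE, ← stirlingSeq_two, show t = (t-2)+1+1 by omega]
    exact Stirling.stirlingSeq'_antitone (by omega : 1 ≤ (t-2)+1)
  have hS2le : S^2 ≤ E^4/16 := by nlinarith
  calc √Real.pi * 16 / E ^ 4 * 4^t / r = √Real.pi * 4^t / (E^4/16 * r) := by
        field_simp
    _ ≤ S2 * 4^t / (S^2 * r) := by
        apply div_le_div₀ (by positivity) ?_ (by positivity) ?_
        · exact mul_le_mul_of_nonneg_right hpi (by positivity)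
        · exact mul_le_mul_of_nonneg_right hS2le hrpos.le



noncomputable def Aa (m : ℕ) (u : ℝ) : ℝ :=
  ∑ k ∈ Finset.Ico (m/2+1) (m+1), (m.choose k : ℝ) * ((1/2+u)^k * (1/2-u)^(m-k))

noncomputable def ff (m : ℕ) (u : ℝ) : ℝ := Aa m u - Aa m (-u)

noncomputable def Dd (m : ℕ) (u : ℝ) : ℝ :=
  (m:ℝ) * ((m-1).choose (m/2)) *
    ((1/2+u)^(m/2) * (1/2-u)^(m-1-m/2) + (1/2-u)^(m/2) * (1/2+u)^(m-1-m/2))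

noncomputable def cst (m : ℕ) : ℝ :=
  if m % 2 = 1 then 2*(m:ℝ)*((m-1).choose (m/2)) else (m:ℝ)*((m-1).choose (m/2))

def bb (m : ℕ) : ℕ := m - 1 - m/2



lemma Aa_hasDeriv {m : ℕ} (hm : 1 ≤ m) (u : ℝ) :
    HasDerivAt (Aa m) ((m:ℝ) * ((m-1).choose (m/2)) * ((1/2+u)^(m/2) * (1/2-u)^(m-1-m/2))) u := by
  classical
  set T : ℕ → ℝ := fun j => (m:ℝ) * ((m-1).choose j) * ((1/2+u)^j * (1/2-u)^(m-1-j)) with hT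
  have hterm : ∀ k ∈ Finset.Ico (m/2+1) (m+1),
      HasDerivAt (fun v => (m.choose k : ℝ) * ((1/2+v)^k * (1/2-v)^(m-k)))
        (T (k-1) - T k) u := by
    intro k hk
    rw [Finset.mem_Ico] at hk
    have hk1 : 1 ≤ k := by omega
    have hkm : k ≤ m := by omega
    have hp : HasDerivAt (fun v : ℝ => (1/2+v)^k) ((k:ℝ)*(1/2+u)^(k-1)) u := by
      have h := (HasDerivAt.const_add (1/2:ℝ) (hasDerivAt_id u)).fun_pow k
      simpa using h
    have hq : HasDerivAt (fun v : ℝ => (1/2-v)^(m-k)) (-((((m-k:ℕ)):ℝ)*(1/2-u)^(m-k-1))) u := by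
      have h := (HasDerivAt.const_sub (1/2:ℝ) (hasDerivAt_id u)).fun_pow (m-k)
      simpa using h
    have h := ((hp.fun_mul hq).const_mul (m.choose k : ℝ))
    convert h using 1
    · rfl
    · rfl
    have c1 : ((m.choose k : ℕ):ℝ) * k = (m:ℝ) * ((m-1).choose (k-1)) := by
      have h := Nat.add_one_mul_choose_eq (m-1) (k-1)
      rw [show m - 1 + 1 = m by omega, show k - 1 + 1 = k by omega] at h
      exact_mod_cast congrArg (Nat.cast : ℕ → ℝ) h.symm
    have c2 : ((m.choose k : ℕ):ℝ) * ((m:ℝ) - k) = (m:ℝ) * ((m-1).choose k) := by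
      have h1 : m.choose k * (m - k) = m * ((m-1).choose k) := by
        have ha := Nat.choose_succ_right_eq m k
        have hb := Nat.add_one_mul_choose_eq (m-1) k
        rw [show m - 1 + 1 = m by omega] at hb
        omega
      have := congrArg (Nat.cast : ℕ → ℝ) h1
      push_cast [Nat.cast_sub hkm] at this
      linarith [this]
    rw [hT]
    simp only []
    rw [show m - 1 - (k-1) = m - k by omega, show m - 1 - k = m - k - 1 by omega]
    have hcast : ((m-k:ℕ):ℝ) = (m:ℝ) - k := by push_cast [Nat.cast_sub hkm]; ring
    rw [hcast]
    linear_combination (-(1/2+u)^(k-1)*(1/2-u)^(m-k))*c1 + ((1/2+u)^k*(1/2-u)^(m-k-1))*c2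
  have hsum := HasDerivAt.fun_sum hterm
  have htel : ∑ k ∈ Finset.Ico (m/2+1) (m+1), (T (k-1) - T k) = T (m/2) - T m := by
    have e1 : ∀ k, T (k-1) - T k = (fun j => T (j-1)) k - (fun j => T (j-1)) (k+1) := by
      intro k; simp
    calc ∑ k ∈ Finset.Ico (m/2+1) (m+1), (T (k-1) - T k)
        = ∑ k ∈ Finset.Ico (m/2+1) (m+1), ((fun j => T (j-1)) k - (fun j => T (j-1)) (k+1)) := by
          exact Finset.sum_congr rfl fun k _ => e1 k
      _ = T (m/2) - T m := by
          rw [Finset.sum_Ico_eq_sub _ (by omega : m/2+1 ≤ m+1)]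
          rw [Finset.sum_range_sub' (fun j => T (j-1)), Finset.sum_range_sub' (fun j => T (j-1))]
          simp
  rw [htel] at hsum
  have hTm : T m = 0 := by
    rw [hT]
    simp [Nat.choose_eq_zero_of_lt (by omega : m - 1 < m)]
  rw [hTm, sub_zero] at hsum
  exact hsum

lemma ff_hasDeriv {m : ℕ} (hm : 1 ≤ m) (u : ℝ) : HasDerivAt (ff m) (Dd m u) u := by
  have h1 := Aa_hasDeriv hm u
  have h2 := (Aa_hasDeriv hm (-u)).comp u (hasDerivAt_neg u)
  have h3 := h1.sub h2
  convert h3 using 1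
  · rfl
  · rfl
  · rfl
  rw [Dd]
  have e1 : (1/2 + -u) = 1/2 - u := by ring
  have e2 : (1/2 - -u) = 1/2 + u := by ring
  rw [e1, e2]
  ring




lemma K_le_one : √(2/(Real.pi*Real.exp 1)) ≤ 1 := by
  have h : √(2/(Real.pi*Real.exp 1)) ≤ √1 := by
    apply Real.sqrt_le_sqrt
    rw [div_le_one (by positivity)]
    nlinarith [Real.pi_gt_three, Real.add_one_le_exp 1]
  simpa using h

lemma num_core {t : ℕ} (ht : 2 ≤ t) :
    3 * √(2/(Real.pi*Real.exp 1)) * (√(2*(t:ℝ)+1) * √t)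
      ≤ 2 * (√Real.pi * 16 / Real.exp 1^4) * (2*t+3) := by
  have ht0 : (0:ℝ) < t := by exact_mod_cast (by omega : 0 < t)
  have ht2 : (2:ℝ) ≤ t := by exact_mod_cast ht
  have he : (0:ℝ) < Real.exp 1 := Real.exp_pos 1
  have hpi : (0:ℝ) < Real.pi := Real.pi_pos
  have hL : 0 ≤ 3 * √(2/(Real.pi*Real.exp 1)) * (√(2*(t:ℝ)+1) * √t) := by positivity
  have hR : 0 ≤ 2 * (√Real.pi * 16 / Real.exp 1^4) * (2*(t:ℝ)+3) := by positivity
  rw [← Real.sqrt_sq hL, ← Real.sqrt_sq hR]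
  apply Real.sqrt_le_sqrt
  have e1 : (3 * √(2/(Real.pi*Real.exp 1)) * (√(2*(t:ℝ)+1) * √t))^2
      = 18*((2*(t:ℝ)+1)*t) / (Real.pi*Real.exp 1) := by
    rw [mul_pow, mul_pow, mul_pow, Real.sq_sqrt (by positivity),
      Real.sq_sqrt (by positivity), Real.sq_sqrt ht0.le]
    ring
  have e2 : (2 * (√Real.pi * 16 / Real.exp 1^4) * (2*(t:ℝ)+3))^2
      = (1024 * Real.pi * (2*(t:ℝ)+3)^2) / Real.exp 1^8 := by
    rw [mul_pow, mul_pow, div_pow, mul_pow, Real.sq_sqrt hpi.le]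
    ring
  rw [e1, e2]
  rw [div_le_div_iff₀ (by positivity) (by positivity)]
  have he7 : Real.exp 1^7 ≤ 1096.64 := by
    calc Real.exp 1^7 ≤ (2.7182818286:ℝ)^7 :=
          pow_le_pow_left₀ (Real.exp_pos 1).le Real.exp_one_lt_d9.le 7
      _ ≤ 1096.64 := by norm_num
  have hpi1 : (3.141592:ℝ) ≤ Real.pi := Real.pi_gt_d6.le
  have hpi2 : (3.141592:ℝ)^2 ≤ Real.pi^2 := by nlinarith
  have main : 18*((2*(t:ℝ)+1)*t)*(Real.exp 1^7) ≤ 1024*Real.pi^2*(2*t+3)^2 := by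
    have h1 : 18*((2*(t:ℝ)+1)*t)*(Real.exp 1^7) ≤ 18*((2*(t:ℝ)+1)*t)*1096.64 :=
      mul_le_mul_of_nonneg_left he7 (by positivity)
    have h2 : 1024*(3.141592:ℝ)^2*(2*t+3)^2 ≤ 1024*Real.pi^2*(2*t+3)^2 := by
      nlinarith [sq_nonneg (2*(t:ℝ)+3)]
    nlinarith [sq_nonneg (t:ℝ)]
  have e8 : Real.exp 1^8 = Real.exp 1^7 * Real.exp 1 := by ring
  rw [e8]
  nlinarith [mul_le_mul_of_nonneg_right main he.le]

lemma Ksqrt3 : √(2/(Real.pi*Real.exp 1)) * √3 ≤ 5/3 := by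
  have he : (0:ℝ) < Real.exp 1 := Real.exp_pos 1
  have hpi : (0:ℝ) < Real.pi := Real.pi_pos
  have hL : (0:ℝ) ≤ √(2/(Real.pi*Real.exp 1)) * √3 := by positivity
  have h2 : (√(2/(Real.pi*Real.exp 1)) * √3)^2 = 6/(Real.pi*Real.exp 1) := by
    rw [mul_pow, Real.sq_sqrt (by positivity), Real.sq_sqrt (by norm_num)]
    ring
  have hpe : (6:ℝ) ≤ Real.pi * Real.exp 1 := by
    nlinarith [Real.pi_gt_three, Real.add_one_le_exp 1]
  have ha2 : (√(2/(Real.pi*Real.exp 1)) * √3)^2 ≤ 1 := by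
    rw [h2, div_le_one (by positivity)]; linarith
  nlinarith [ha2, hL]

lemma sqrt2_le_two : √(2:ℝ) ≤ 2 := by
  nlinarith [Real.sq_sqrt (by norm_num : (0:ℝ) ≤ 2), Real.sqrt_nonneg (2:ℝ)]

lemma helper {t : ℕ} (ht : 2 ≤ t) {R s : ℝ} (hs : 0 ≤ s) (hsle : s ≤ 2*(t:ℝ)+1)
    (hR : (2:ℝ)/3 * (((2*t).choose t : ℝ) * (1/4:ℝ)^t * (2*(t:ℝ)+3)) ≤ R) :
    √(2/(Real.pi*Real.exp 1)) * √s ≤ R := by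
  have ht0 : (0:ℝ) < t := by exact_mod_cast (by omega : 0 < t)
  have hst : (0:ℝ) < √t := Real.sqrt_pos.2 ht0
  set K := √(2/(Real.pi*Real.exp 1)) with hK
  set B := √Real.pi * 16 / Real.exp 1 ^ 4 with hB
  have hK0 : 0 ≤ K := Real.sqrt_nonneg _
  have hB0 : 0 ≤ B := by positivity
  have h1 := num_core ht
  have hC := centralBinom_lower ht
  have h14 : (1/4:ℝ)^t * 4^t = 1 := by rw [← mul_pow]; norm_num
  have step0 : K * √s ≤ K * √(2*(t:ℝ)+1) :=
    mul_le_mul_of_nonneg_left (Real.sqrt_le_sqrt hsle) hK0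
  have step1 : K * √(2*(t:ℝ)+1) ≤ 2*B*(2*(t:ℝ)+3)/(3*√t) := by
    rw [le_div_iff₀ (by positivity)]
    nlinarith [h1]
  have step2 : 2*B*(2*(t:ℝ)+3)/(3*√t) ≤ (2:ℝ)/3 * (((2*t).choose t : ℝ) * (1/4:ℝ)^t * (2*(t:ℝ)+3)) := by
    have h2 := mul_le_mul_of_nonneg_left hC
      (by positivity : (0:ℝ) ≤ (2/3)*(2*(t:ℝ)+3)*(1/4:ℝ)^t)
    have e : (2:ℝ)/3*(2*(t:ℝ)+3)*(1/4:ℝ)^t*(B*4^t/√t) = 2*B*(2*(t:ℝ)+3)/(3*√t) := by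
      rw [show (2:ℝ)*B*(2*(t:ℝ)+3)/(3*√t) = (2/3)*(2*(t:ℝ)+3)*(B/√(t:ℝ)) by ring,
        show (2:ℝ)/3*(2*(t:ℝ)+3)*(1/4:ℝ)^t*(B*4^t/√(t:ℝ))
          = (2/3)*(2*(t:ℝ)+3)*(B/√(t:ℝ))*((1/4:ℝ)^t*4^t) by ring, h14, mul_one]
    rw [← e]
    calc (2:ℝ)/3*(2*(t:ℝ)+3)*(1/4:ℝ)^t*(B*4^t/√t)
        ≤ (2:ℝ)/3*(2*(t:ℝ)+3)*(1/4:ℝ)^t*((2*t).choose t : ℝ) := h2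
      _ = (2:ℝ)/3 * (((2*t).choose t : ℝ) * (1/4:ℝ)^t * (2*(t:ℝ)+3)) := by ring
  linarith

lemma num_ineq {m : ℕ} (hm : 1 ≤ m) :
    √(2/(Real.pi*Real.exp 1)) * √m ≤ cst m * (1/4:ℝ)^(bb m) * (1 - 4*(bb m)/(3*m)) := by
  have hK0 : 0 ≤ √(2/(Real.pi*Real.exp 1)) := Real.sqrt_nonneg _
  set K := √(2/(Real.pi*Real.exp 1)) with hKdef
  rcases Nat.lt_or_ge m 4 with h4 | h4
  · interval_cases m
    · rw [show bb 1 = 0 from rfl, show cst 1 = 2 by norm_num [cst]]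
      norm_num
      linarith [K_le_one]
    · rw [show bb 2 = 0 from rfl, show cst 2 = 2 by norm_num [cst]]
      norm_num
      calc K * √2 ≤ 1 * √2 :=
            mul_le_mul_of_nonneg_right K_le_one (Real.sqrt_nonneg 2)
        _ ≤ 2 := by rw [one_mul]; exact sqrt2_le_two
    · rw [show bb 3 = 1 from rfl, show cst 3 = 12 by norm_num [cst]]
      norm_num
      have h := Ksqrt3
      rw [← hKdef] at h
      linarith
  · rcases Nat.even_or_odd m with he | ho
    · obtain ⟨t, rfl⟩ := he
      obtain ⟨c, rfl⟩ : ∃ c, t = c+1 := ⟨t-1, by omega⟩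
      have hc1 : 1 ≤ c := by omega
      rw [cst, bb]
      rw [show ((c+1)+(c+1)) % 2 = 0 by omega]
      simp only [if_neg (by omega : ¬ (0 = 1))]
      rw [show ((c+1)+(c+1))/2 = c+1 by omega, show (c+1)+(c+1)-1 = 2*c+1 by omega,
        show 2*c+1-(c+1) = c by omega]
      have p1 := Nat.choose_succ_succ (2*c+1) c
      have p2 : (2*c+1).choose c = (2*c+1).choose (c+1) := by
        have h := Nat.choose_symm (by omega : c+1 ≤ 2*c+1)
        rw [show 2*c+1-(c+1) = c by omega] at h
        exact h
      have hCC : (2*(c+1)).choose (c+1) = 2 * ((2*c+1).choose (c+1)) := by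
        rw [show 2*(c+1) = (2*c+1)+1 by ring]
        simp only [Nat.succ_eq_add_one] at p1
        omega
      apply helper (t := c+1) (by omega)
      · positivity
      · push_cast; linarith
      · have hCCr : (((2*(c+1)).choose (c+1) : ℕ):ℝ) = 2 * ((2*c+1).choose (c+1) : ℝ) := by
          exact_mod_cast congrArg (Nat.cast : ℕ → ℝ) hCC
        set X := ((2*c+1).choose (c+1) : ℝ) with hX
        have hX0 : 0 ≤ X := by positivity
        have hP0 : (0:ℝ) ≤ (1/4:ℝ)^c := by positivity
        rw [hCCr]
        have efrac : (1 : ℝ) - 4*(c:ℝ)/(3*(((c+1)+(c+1):ℕ):ℝ)) = (2*(c:ℝ)+6)/(3*(2*(c:ℝ)+2)) := by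
          have hpos : (0:ℝ) < 2*(c:ℝ)+2 := by positivity
          push_cast
          field_simp
          ring
        rw [efrac]
        have eR : (((c+1)+(c+1):ℕ):ℝ) * X * (1/4:ℝ)^c * ((2*(c:ℝ)+6)/(3*(2*(c:ℝ)+2)))
            = X * (1/4:ℝ)^c * (2*(c:ℝ)+6) / 3 := by
          have hpos : (0:ℝ) < 2*(c:ℝ)+2 := by positivity
          push_cast
          field_simp
          ring
        rw [eR]
        have e14 : (1/4:ℝ)^(c+1) = (1/4:ℝ)^c * (1/4) := pow_succ _ _
        rw [e14]
        push_cast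
        nlinarith [mul_nonneg hX0 hP0]
    · obtain ⟨t, rfl⟩ := ho
      have ht2 : 2 ≤ t := by omega
      rw [cst, bb]
      rw [show (2*t+1) % 2 = 1 by omega]
      simp only [eq_self_iff_true, if_true]
      rw [show (2*t+1)/2 = t by omega, show 2*t+1-1 = 2*t by omega,
        show 2*t-t = t by omega]
      apply helper (t := t) ht2
      · positivity
      · push_cast; linarith
      · set X := ((2*t).choose t : ℝ) with hX
        have hX0 : 0 ≤ X := by positivity
        have hP0 : (0:ℝ) ≤ (1/4:ℝ)^t := by positivity
        have efrac : (1 : ℝ) - 4*(t:ℝ)/(3*(((2*t+1:ℕ)):ℝ)) = (2*(t:ℝ)+3)/(3*(2*(t:ℝ)+1)) := by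
          have hpos : (0:ℝ) < 2*(t:ℝ)+1 := by positivity
          push_cast
          field_simp
          ring
        rw [efrac]
        have eR : 2*(((2*t+1:ℕ)):ℝ) * X * (1/4:ℝ)^t * ((2*(t:ℝ)+3)/(3*(2*(t:ℝ)+1)))
            = (2:ℝ)/3 * (X * (1/4:ℝ)^t * (2*(t:ℝ)+3)) := by
          have hpos : (0:ℝ) < 2*(t:ℝ)+1 := by positivity
          push_cast
          field_simp
        rw [eR]

lemma Dd_continuous (m : ℕ) : Continuous (Dd m) := by
  unfold Dd; fun_prop

lemma Dd_eq {m : ℕ} (hm : 1 ≤ m) (u : ℝ) : Dd m u = cst m * (1/4 - u^2)^(bb m) := by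
  have hsplit : (1/4 - u^2 : ℝ) = (1/2+u)*(1/2-u) := by ring
  rcases Nat.even_or_odd m with he | ho
  · obtain ⟨t, rfl⟩ := he
    obtain ⟨b, rfl⟩ : ∃ b, t = b+1 := ⟨t-1, by omega⟩
    rw [Dd, cst, bb, hsplit]
    rw [show ((b+1)+(b+1)) % 2 = 0 by omega, show ((b+1)+(b+1))/2 = b+1 by omega,
      show (b+1)+(b+1)-1-(b+1) = b by omega]
    simp only [if_neg (by omega : ¬ (0 = 1))]
    rw [mul_pow, pow_succ, pow_succ]
    ring
  · obtain ⟨t, rfl⟩ := ho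
    rw [Dd, cst, bb, hsplit]
    rw [show (2*t+1) % 2 = 1 by omega, show (2*t+1)/2 = t by omega,
      show 2*t+1-1-t = t by omega]
    simp only [eq_self_iff_true, if_true]
    rw [mul_pow]
    ring

lemma Dd_nonneg {m : ℕ} (hm : 1 ≤ m) {u : ℝ} (h1 : -(1/2) ≤ u) (h2 : u ≤ 1/2) :
    0 ≤ Dd m u := by
  rw [Dd_eq hm]
  have h3 : (0:ℝ) ≤ 1/4 - u^2 := by nlinarith
  have h4 : 0 ≤ cst m := by
    rw [cst]; split <;> positivity
  positivity

lemma cst_nonneg (m : ℕ) : 0 ≤ cst m := by rw [cst]; split <;> positivity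


lemma ff_zero (m : ℕ) : ff m 0 = 0 := by simp [ff]

lemma ff_ftc {m : ℕ} (hm : 1 ≤ m) (a b : ℝ) :
    ff m b - ff m a = ∫ u in a..b, Dd m u :=
  (intervalIntegral.integral_eq_sub_of_hasDerivAt (fun u _ => ff_hasDeriv hm u)
    ((Dd_continuous m).intervalIntegrable a b)).symm

lemma ff_gen {m : ℕ} (hm : 1 ≤ m) {θ : ℝ} (h0 : 0 ≤ θ) (h2 : θ ≤ 1/2)
    (hsq : θ^2 * m ≤ 1) :
    √(2/(Real.pi*Real.exp 1)) * √m * θ ≤ ff m θ := by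
  have hm0 : (0:ℝ) < m := by exact_mod_cast hm
  have hint : ff m θ = ∫ u in (0:ℝ)..θ, Dd m u := by
    rw [← ff_ftc hm 0 θ, ff_zero, sub_zero]
  set c := cst m with hc
  set b := bb m with hbdef
  have hbm : (b:ℝ) ≤ m := by
    have : b ≤ m := by rw [hbdef, bb]; omega
    exact_mod_cast this
  have hcn : 0 ≤ c := cst_nonneg m
  have hlow : ∀ x ∈ Set.Icc (0:ℝ) θ, c * (1/4:ℝ)^b * (1 - 4*b*x^2) ≤ Dd m x := by
    intro x hx
    obtain ⟨hx0, hx1⟩ := hx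
    have hx2 : x ≤ 1/2 := le_trans hx1 h2
    rw [Dd_eq hm]
    have hb1 : (1:ℝ) + b * (-(4*x^2)) ≤ (1 + (-(4*x^2)))^b := by
      apply one_add_mul_le_pow
      nlinarith
    have he : (1/4 - x^2 : ℝ) = (1/4) * (1 + (-(4*x^2))) := by ring
    rw [he, mul_pow]
    have : c * (1/4:ℝ)^b * (1 - 4*b*x^2) = c * ((1/4:ℝ)^b * (1 + b*(-(4*x^2)))) := by ring
    rw [this]
    apply mul_le_mul_of_nonneg_left _ hcn
    apply mul_le_mul_of_nonneg_left _ (by positivity)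
    exact hb1
  have hmono : (∫ u in (0:ℝ)..θ, c * (1/4:ℝ)^b * (1 - 4*b*u^2)) ≤ ∫ u in (0:ℝ)..θ, Dd m u := by
    apply intervalIntegral.integral_mono_on h0
    · apply Continuous.intervalIntegrable; fun_prop
    · exact (Dd_continuous m).intervalIntegrable _ _
    · exact hlow
  have hcomp : (∫ u in (0:ℝ)..θ, c * (1/4:ℝ)^b * (1 - 4*b*u^2))
      = c * (1/4:ℝ)^b * (θ - 4*b*θ^3/3) := by
    rw [intervalIntegral.integral_const_mul]
    congr 1
    rw [intervalIntegral.integral_sub intervalIntegrable_const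
      (by apply Continuous.intervalIntegrable; fun_prop)]
    simp only [intervalIntegral.integral_const_mul, integral_pow, intervalIntegral.integral_const,
      smul_eq_mul]
    push_cast
    ring
  have hnum := num_ineq hm
  rw [← hc, ← hbdef] at hnum
  have hth3 : θ^3 * m ≤ θ := by nlinarith [mul_le_mul_of_nonneg_left hsq h0]
  have hstep : c * (1/4:ℝ)^b * (1 - 4*b/(3*m)) * θ ≤ c * (1/4:ℝ)^b * (θ - 4*b*θ^3/3) := by
    have hcb : (0:ℝ) ≤ c * (1/4:ℝ)^b := by positivity
    have hb0 : (0:ℝ) ≤ (b:ℝ) := by positivity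
    have h1 : (4:ℝ)*b*θ^3/3 ≤ 4*b*θ/(3*m) := by
      rw [div_le_div_iff₀ (by norm_num) (by positivity)]
      nlinarith [mul_le_mul_of_nonneg_left hth3 hb0]
    have key : (1 - 4*(b:ℝ)/(3*m)) * θ ≤ θ - 4*b*θ^3/3 := by
      have h2 : (1 - 4*(b:ℝ)/(3*↑m)) * θ = θ - (4*b*θ/(3*m)) := by ring
      rw [h2]; linarith
    calc c * (1/4:ℝ)^b * (1 - 4*b/(3*m)) * θ = c * (1/4:ℝ)^b * ((1 - 4*(b:ℝ)/(3*m)) * θ) := by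
          ring
      _ ≤ c * (1/4:ℝ)^b * (θ - 4*b*θ^3/3) := mul_le_mul_of_nonneg_left key hcb
  calc √(2/(Real.pi*Real.exp 1)) * √m * θ
      ≤ c * (1/4:ℝ)^b * (1 - 4*b/(3*m)) * θ := mul_le_mul_of_nonneg_right hnum h0
    _ ≤ c * (1/4:ℝ)^b * (θ - 4*b*θ^3/3) := hstep
    _ = ∫ u in (0:ℝ)..θ, c * (1/4:ℝ)^b * (1 - 4*b*u^2) := hcomp.symm
    _ ≤ ∫ u in (0:ℝ)..θ, Dd m u := hmono
    _ = ff m θ := hint.symm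

lemma ff_main {m : ℕ} (hm : 1 ≤ m) {θ : ℝ} (h0 : 0 ≤ θ) (h2 : θ < 1/2) :
    √(2/(Real.pi*Real.exp 1)) * min (√m * θ) 1 ≤ ff m θ := by
  have hm0 : (0:ℝ) < m := by exact_mod_cast hm
  have hsm : (0:ℝ) < √m := Real.sqrt_pos.2 hm0
  rcases le_or_gt (√m * θ) 1 with hc | hc
  · rw [min_eq_left hc]
    have hsq : θ^2 * m ≤ 1 := by
      have h := mul_le_mul_of_nonneg_left hc (by positivity : (0:ℝ) ≤ √m * θ)
      calc θ^2 * m = (√m * θ) * (√m * θ) := by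
            rw [show (√m * θ) * (√m * θ) = (√m * √m) * θ^2 by ring,
              Real.mul_self_sqrt hm0.le]; ring
        _ ≤ 1 := by nlinarith
    rw [← mul_assoc]
    exact ff_gen hm h0 h2.le hsq
  · rw [min_eq_right hc.le]
    set θ₀ : ℝ := 1/√m with hθ₀
    have hθ₀pos : 0 < θ₀ := by positivity
    have hθ₀lt : θ₀ < θ := by
      rw [hθ₀, div_lt_iff₀ hsm]
      linarith [hc]
    have hsq : θ₀^2 * m ≤ 1 := by
      rw [hθ₀]
      rw [div_pow, one_pow, Real.sq_sqrt hm0.le]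
      rw [div_mul_eq_mul_div, one_mul, div_le_one hm0]
    have hgen := ff_gen hm hθ₀pos.le (by linarith) hsq
    have hval : √m * θ₀ = 1 := by
      rw [hθ₀, mul_one_div, div_self hsm.ne']
    have hmono2 : ff m θ₀ ≤ ff m θ := by
      have h := ff_ftc hm θ₀ θ
      have hpos : 0 ≤ ∫ u in θ₀..θ, Dd m u := by
        apply intervalIntegral.integral_nonneg hθ₀lt.le
        intro x hx
        exact Dd_nonneg hm (by linarith [hx.1]) (by linarith [hx.2])
      linarith
    calc √(2/(Real.pi*Real.exp 1)) * 1 = √(2/(Real.pi*Real.exp 1)) * √m * θ₀ := by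
          rw [mul_assoc, hval]
      _ ≤ ff m θ₀ := hgen
      _ ≤ ff m θ := hmono2




lemma group_sum (m : ℕ) (G : ℕ → Prop) [DecidablePred G] (w : ℕ → ℝ) :
    ∑ s ∈ Finset.univ.filter (fun s : Finset (Fin m) => G s.card), w s.card
      = ∑ k ∈ Finset.range (m+1), if G k then (m.choose k : ℝ) * w k else 0 := by
  classical
  rw [Finset.sum_filter]
  rw [show (Finset.univ : Finset (Finset (Fin m))) = (Finset.univ : Finset (Fin m)).powerset
    from (Finset.powerset_univ).symm]
  rw [Finset.sum_powerset_apply_card (fun k => if G k then w k else 0)]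
  rw [Finset.card_univ, Fintype.card_fin]
  apply Finset.sum_congr rfl
  intro k _
  split
  · rw [nsmul_eq_mul]
  · simp

theorem rademacher_reduction
    {Ω : Type*} [MeasurableSpace Ω] (μ : Measure Ω) [IsProbabilityMeasure μ]
    (m : ℕ) (hm : 1 ≤ m) (θ : ℝ) (hθ0 : 0 ≤ θ) (hθ1 : θ < 1 / 2)
    (X : Fin m → Ω → ℝ)
    (hmeas : ∀ i, Measurable (X i))
    (hrange : ∀ i ω, X i ω = 1 ∨ X i ω = -1)
    (hindep : iIndepFun X μ)
    (hdist : ∀ i, μ {ω | X i ω = 1} = ENNReal.ofReal (1 / 2 + θ)) :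
    (μ {ω | 0 < ∑ i, X i ω}).toReal = Aa m θ ∧
      (μ {ω | (∑ i, X i ω) < 0}).toReal = Aa m (-θ) := by
  classical
  have hp : (0:ℝ) ≤ 1/2 + θ := by linarith
  have hq : (0:ℝ) ≤ 1/2 - θ := by linarith
  set e : Finset (Fin m) → Fin m → ℝ := fun s i => if i ∈ s then 1 else -1 with he
  set A : Finset (Fin m) → Set Ω := fun s => ⋂ i ∈ Finset.univ, X i ⁻¹' {e s i} with hA
  have hp_meas : ∀ i, μ (X i ⁻¹' {1}) = ENNReal.ofReal (1/2 + θ) := by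
    intro i
    rw [← hdist i]
    rfl
  have hq_meas : ∀ i, μ (X i ⁻¹' {-1}) = ENNReal.ofReal (1/2 - θ) := by
    intro i
    have hu : X i ⁻¹' {1} ∪ X i ⁻¹' {-1} = Set.univ := by
      ext ω
      simp only [Set.mem_union, Set.mem_preimage, Set.mem_singleton_iff, Set.mem_univ, iff_true]
      exact hrange i ω
    have hd : Disjoint (X i ⁻¹' {1}) (X i ⁻¹' {-1}) := by
      rw [Set.disjoint_left]
      intro ω h1 h2
      simp only [Set.mem_preimage, Set.mem_singleton_iff] at h1 h2
      rw [h1] at h2; norm_num at h2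
    have hadd : μ (X i ⁻¹' {1}) + μ (X i ⁻¹' {-1}) = 1 := by
      rw [← measure_union hd ((hmeas i) (measurableSet_singleton _)), hu, measure_univ]
    rw [hp_meas i] at hadd
    have hsum : ENNReal.ofReal (1/2 + θ) + ENNReal.ofReal (1/2 - θ) = 1 := by
      rw [← ENNReal.ofReal_add hp hq]
      norm_num
    have := hadd.trans hsum.symm
    exact (ENNReal.add_right_inj ENNReal.ofReal_ne_top).1 this
  have hAmeas : ∀ s, MeasurableSet (A s) := fun s =>
    MeasurableSet.iInter fun i => MeasurableSet.iInter fun _ =>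
      (hmeas i) (measurableSet_singleton _)
  have hAval : ∀ s : Finset (Fin m),
      μ (A s) = ENNReal.ofReal ((1/2+θ)^s.card * (1/2-θ)^(m - s.card)) := by
    intro s
    have hprod := hindep.measure_inter_preimage_eq_mul Finset.univ
      (sets := fun i => {e s i}) (fun i _ => measurableSet_singleton _)
    rw [hA]
    simp only []
    rw [hprod]
    have hterm : ∀ i, μ (X i ⁻¹' {e s i})
        = if i ∈ s then ENNReal.ofReal (1/2+θ) else ENNReal.ofReal (1/2-θ) := by
      intro i
      by_cases hi : i ∈ s
      · rw [if_pos hi, show e s i = 1 from if_pos hi, hp_meas i]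
      · rw [if_neg hi, show e s i = -1 from if_neg hi, hq_meas i]
    rw [Finset.prod_congr rfl (fun i _ => hterm i), Finset.prod_ite,
      Finset.prod_const, Finset.prod_const]
    have c1 : Finset.univ.filter (fun i => i ∈ s) = s := by
      ext i; simp
    have c2 : (Finset.univ.filter (fun i => i ∉ s)).card = m - s.card := by
      have : Finset.univ.filter (fun i => i ∉ s) = sᶜ := by
        ext i; simp [Finset.mem_compl]
      rw [this, Finset.card_compl, Fintype.card_fin]
    rw [c1, c2, ← ENNReal.ofReal_pow hp, ← ENNReal.ofReal_pow hq,
      ← ENNReal.ofReal_mul (by positivity)]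
  have key1 : ∀ ω i, X i ω = e (Finset.univ.filter (fun j => X j ω = 1)) i := by
    intro ω i
    by_cases h1 : X i ω = 1
    · rw [show e (Finset.univ.filter (fun j => X j ω = 1)) i = 1
        from if_pos (by simp [h1])]
      exact h1
    · rw [show e (Finset.univ.filter (fun j => X j ω = 1)) i = -1
        from if_neg (by simp [h1])]
      exact (hrange i ω).resolve_left h1
  have key2 : ∀ (s : Finset (Fin m)) ω, (∀ i, X i ω = e s i) →
      Finset.univ.filter (fun j => X j ω = 1) = s := by
    intro s ω h
    ext i
    simp only [Finset.mem_filter, Finset.mem_univ, true_and]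
    constructor
    · intro h1
      by_contra hi
      rw [h i, show e s i = -1 from if_neg hi] at h1
      norm_num at h1
    · intro hi
      rw [h i, show e s i = 1 from if_pos hi]
  have hcard_le : ∀ s : Finset (Fin m), s.card ≤ m := by
    intro s
    simpa using Finset.card_le_univ s
  have key3 : ∀ ω, ∑ i, X i ω
      = 2*((Finset.univ.filter (fun j => X j ω = 1)).card : ℝ) - m := by
    intro ω
    have e1 : ∑ i, X i ω = ∑ i, e (Finset.univ.filter (fun j => X j ω = 1)) i :=
      Finset.sum_congr rfl (fun i _ => key1 ω i)
    rw [e1, he]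
    simp only []
    rw [Finset.sum_ite, Finset.sum_const, Finset.sum_const]
    have c1 : Finset.univ.filter
        (fun i => i ∈ Finset.univ.filter (fun j => X j ω = 1))
        = Finset.univ.filter (fun j => X j ω = 1) := by
      ext i; simp
    have c2 : (Finset.univ.filter
        (fun i => i ∉ Finset.univ.filter (fun j => X j ω = 1))).card
        = m - (Finset.univ.filter (fun j => X j ω = 1)).card := by
      have : Finset.univ.filter (fun i => i ∉ Finset.univ.filter (fun j => X j ω = 1))
          = (Finset.univ.filter (fun j => X j ω = 1))ᶜ := by
        ext i; simp [Finset.mem_compl]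
      rw [this, Finset.card_compl, Fintype.card_fin]
    rw [c1, c2]
    have hle := hcard_le (Finset.univ.filter (fun j => X j ω = 1))
    simp only [nsmul_eq_mul, Nat.cast_sub hle]
    push_cast
    ring
  have hEvent : ∀ (T : Finset (Finset (Fin m))),
      μ {ω | (Finset.univ.filter (fun j => X j ω = 1)) ∈ T}
        = ∑ s ∈ T,
            ENNReal.ofReal ((1/2+θ)^s.card * (1/2-θ)^(m - s.card)) := by
    intro T
    have hset : {ω | (Finset.univ.filter (fun j => X j ω = 1)) ∈ T}
        = ⋃ s ∈ T, A s := by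
      ext ω
      simp only [Set.mem_setOf_eq, Set.mem_iUnion, exists_prop]
      constructor
      · intro hF
        refine ⟨Finset.univ.filter (fun j => X j ω = 1), hF, ?_⟩
        rw [hA]
        simp only []
        rw [Set.mem_iInter₂]
        intro i _
        rw [Set.mem_preimage, Set.mem_singleton_iff]
        exact key1 ω i
      · rintro ⟨s, hFs, hmem⟩
        have hall : ∀ i, X i ω = e s i := by
          intro i
          rw [hA] at hmem
          simp only [] at hmem
          rw [Set.mem_iInter₂] at hmem
          have := hmem i (Finset.mem_univ i)
          rwa [Set.mem_preimage, Set.mem_singleton_iff] at this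
        rw [key2 s ω hall]
        exact hFs
    rw [hset]
    rw [measure_biUnion_finset ?hdisj (fun s _ => hAmeas s)]
    · exact Finset.sum_congr rfl fun s _ => hAval s
    case hdisj =>
      intro s hs t ht hst
      refine Set.disjoint_left.2 fun ω hωs hωt => hst ?_
      have h1 : ∀ i, X i ω = e s i := by
        intro i
        have := Set.mem_iInter₂.1 hωs i (Finset.mem_univ i)
        rwa [Set.mem_preimage, Set.mem_singleton_iff] at this
      have h2 : ∀ i, X i ω = e t i := by
        intro i
        have := Set.mem_iInter₂.1 hωt i (Finset.mem_univ i)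
        rwa [Set.mem_preimage, Set.mem_singleton_iff] at this
      rw [← key2 s ω h1, ← key2 t ω h2]
  constructor
  · -- positive part
    have hEq : {ω | 0 < ∑ i, X i ω}
        = {ω | (Finset.univ.filter (fun j => X j ω = 1))
            ∈ Finset.univ.filter (fun s : Finset (Fin m) => m < 2*s.card)} := by
      ext ω
      simp only [Set.mem_setOf_eq, Finset.mem_filter, Finset.mem_univ, true_and]
      rw [key3 ω]
      constructor
      · intro h
        have : (m:ℝ) < 2*((Finset.univ.filter (fun j => X j ω = 1)).card : ℝ) := by linarith
        exact_mod_cast this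
      · intro h
        have : (m:ℝ) < 2*((Finset.univ.filter (fun j => X j ω = 1)).card : ℝ) := by
          exact_mod_cast h
        linarith
    rw [hEq, hEvent (Finset.univ.filter (fun s : Finset (Fin m) => m < 2*s.card))]
    rw [ENNReal.toReal_sum (fun s _ => ENNReal.ofReal_ne_top)]
    have hterm2 : ∀ s : Finset (Fin m),
        (ENNReal.ofReal ((1/2+θ)^s.card * (1/2-θ)^(m - s.card))).toReal
          = (1/2+θ)^s.card * (1/2-θ)^(m - s.card) := by
      intro s
      exact ENNReal.toReal_ofReal (by positivity)
    rw [Finset.sum_congr rfl (fun s _ => hterm2 s)]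
    rw [show ∑ s ∈ Finset.univ.filter (fun s : Finset (Fin m) => m < 2*s.card),
        ((1/2+θ)^s.card * (1/2-θ)^(m - s.card))
        = ∑ k ∈ Finset.range (m+1), if m < 2*k then
            (m.choose k : ℝ) * ((1/2+θ)^k * (1/2-θ)^(m-k)) else 0
      from group_sum m (fun k => m < 2*k) (fun k => (1/2+θ)^k * (1/2-θ)^(m-k))]
    rw [Aa, ← Finset.sum_filter]
    apply Finset.sum_congr
    · ext k
      simp only [Finset.mem_filter, Finset.mem_range, Finset.mem_Ico]
      omega
    · intro k _
      ring
  · -- negative part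
    have hEq : {ω | (∑ i, X i ω) < 0}
        = {ω | (Finset.univ.filter (fun j => X j ω = 1))
            ∈ Finset.univ.filter (fun s : Finset (Fin m) => 2*s.card < m)} := by
      ext ω
      simp only [Set.mem_setOf_eq, Finset.mem_filter, Finset.mem_univ, true_and]
      rw [key3 ω]
      constructor
      · intro h
        have : 2*((Finset.univ.filter (fun j => X j ω = 1)).card : ℝ) < m := by linarith
        exact_mod_cast this
      · intro h
        have : 2*((Finset.univ.filter (fun j => X j ω = 1)).card : ℝ) < m := by
          exact_mod_cast h
        linarith
    rw [hEq, hEvent (Finset.univ.filter (fun s : Finset (Fin m) => 2*s.card < m))]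
    rw [ENNReal.toReal_sum (fun s _ => ENNReal.ofReal_ne_top)]
    have hterm2 : ∀ s : Finset (Fin m),
        (ENNReal.ofReal ((1/2+θ)^s.card * (1/2-θ)^(m - s.card))).toReal
          = (1/2+θ)^s.card * (1/2-θ)^(m - s.card) := by
      intro s
      exact ENNReal.toReal_ofReal (by positivity)
    rw [Finset.sum_congr rfl (fun s _ => hterm2 s)]
    rw [show ∑ s ∈ Finset.univ.filter (fun s : Finset (Fin m) => 2*s.card < m),
        ((1/2+θ)^s.card * (1/2-θ)^(m - s.card))
        = ∑ k ∈ Finset.range (m+1), if 2*k < m then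
            (m.choose k : ℝ) * ((1/2+θ)^k * (1/2-θ)^(m-k)) else 0
      from group_sum m (fun k => 2*k < m) (fun k => (1/2+θ)^k * (1/2-θ)^(m-k))]
    rw [Aa, ← Finset.sum_filter]
    rw [show (1/2 + -θ : ℝ) = 1/2 - θ by ring, show (1/2 - -θ : ℝ) = 1/2 + θ by ring]
    apply Finset.sum_nbij' (i := fun k => m - k) (j := fun k => m - k)
    · intro k hk
      simp only [Finset.mem_filter, Finset.mem_range] at hk
      simp only [Finset.mem_Ico]
      omega
    · intro k hk
      simp only [Finset.mem_Ico] at hk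
      simp only [Finset.mem_filter, Finset.mem_range]
      omega
    · intro k hk
      simp only [Finset.mem_filter, Finset.mem_range] at hk
      omega
    · intro k hk
      simp only [Finset.mem_Ico] at hk
      omega
    · intro k hk
      simp only [Finset.mem_filter, Finset.mem_range] at hk
      rw [show m - (m-k) = k by omega, Nat.choose_symm (by omega : k ≤ m)]
      ring

theorem rademacher_sum_majority_gap
    {Ω : Type*} [MeasurableSpace Ω] (μ : Measure Ω) [IsProbabilityMeasure μ]
    (m : ℕ) (hm : 1 ≤ m) (θ : ℝ) (hθ0 : 0 ≤ θ) (hθ1 : θ < 1 / 2)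
    (X : Fin m → Ω → ℝ)
    (hmeas : ∀ i, Measurable (X i))
    (hrange : ∀ i ω, X i ω = 1 ∨ X i ω = -1)
    (hindep : iIndepFun X μ)
    (hdist : ∀ i, μ {ω | X i ω = 1} = ENNReal.ofReal (1 / 2 + θ)) :
    (μ {ω | 0 < ∑ i, X i ω}).toReal - (μ {ω | (∑ i, X i ω) < 0}).toReal ≥
      Real.sqrt (2 / (Real.pi * Real.exp 1)) * min (Real.sqrt m * θ) 1 := by
  obtain ⟨h1, h2⟩ := rademacher_reduction μ m hm θ hθ0 hθ1 X hmeas hrange hindep hdist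
  rw [ge_iff_le, h1, h2]
  exact ff_main hm hθ0 hθ1
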